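/- Let X be a real Banach space. Then the following statements are equivalent: (i) for every nonempty closed convex V ⊆ X and every nonempty compact F ⊆ X, rad_V(F) = rad_X(F) + d(V, cent_X(F)); (ii) for every nonempty closed convex V ⊆ X and every nonempty compact F ⊆ X, rad_V(F) = rad_X(F) + lim_{δ→0⁺} d(V, cent_X(F,δ)) (by monotonicity this limit exists and equals sup_{δ>0} d(V, cent_X(F,δ))); (iii) for every nonempty closed convex V ⊆ X and every nonempty finite F ⊆ X, rad_V(F) = rad_X(F) + d(V, cent_X(F)). -/

import Mathlib

open Filter Topology MeasureTheory

/-- `r(x,B) = sup{‖x − b‖ : b ∈ B}`. -/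
noncomputable def rMax {X : Type*} [NormedAddCommGroup X] (x : X) (B : Set X) : ℝ :=
  sSup ((fun b => ‖x - b‖) '' B)

/-- Restricted Chebyshev radius of `B` in `V`: `rad_V(B) = inf{r(v,B) : v ∈ V}`. -/
noncomputable def chebRad {X : Type*} [NormedAddCommGroup X] (V B : Set X) : ℝ :=
  sInf ((fun v => rMax v B) '' V)

/-- Restricted Chebyshev centers of `B` in `V`: `{v ∈ V : r(v,B) = rad_V(B)}`. -/
def chebCent {X : Type*} [NormedAddCommGroup X] (V B : Set X) : Set X :=
  {v | v ∈ V ∧ rMax v B = chebRad V B}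

/-- `diam(B) = sup{‖z₁ − z₂‖ : z₁, z₂ ∈ B}`. -/
noncomputable def setDiam {X : Type*} [NormedAddCommGroup X] (B : Set X) : ℝ :=
  sSup ((fun p : X × X => ‖p.1 - p.2‖) '' (B ×ˢ B))

/-- `d(A,B) = inf{‖a − b‖ : a ∈ A, b ∈ B}`. -/
noncomputable def setDist' {X : Type*} [NormedAddCommGroup X] (A B : Set X) : ℝ :=
  sInf ((fun p : X × X => ‖p.1 - p.2‖) '' (A ×ˢ B))

/-- `cent_X(B,δ) = {x ∈ X : r(x,B) ≤ rad_X(B) + δ}`. -/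
def chebCentDelta {X : Type*} [NormedAddCommGroup X] (B : Set X) (δ : ℝ) : Set X :=
  {x : X | rMax x B ≤ chebRad (Set.univ : Set X) B + δ}

namespace ChebAux

variable {X : Type*} [NormedAddCommGroup X]

/-- sup over δ>0 of d(V, cent(F,δ)). -/
noncomputable def Lsup (V F : Set X) : ℝ :=
  sSup ((fun δ => setDist' V (chebCentDelta F δ)) '' Set.Ioi (0 : ℝ))

lemma bddAbove_rmax (x : X) {F : Set X} (hF : Bornology.IsBounded F) :
    BddAbove ((fun b => ‖x - b‖) '' F) := by
  obtain ⟨C, hC⟩ := isBounded_iff_forall_norm_le.1 hF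
  refine ⟨‖x‖ + C, ?_⟩
  rintro _ ⟨b, hb, rfl⟩
  calc ‖x - b‖ ≤ ‖x‖ + ‖b‖ := norm_sub_le _ _
    _ ≤ ‖x‖ + C := by linarith [hC b hb]

lemma le_rMax {x b : X} {F : Set X} (hbd : Bornology.IsBounded F) (hb : b ∈ F) :
    ‖x - b‖ ≤ rMax x F :=
  le_csSup (bddAbove_rmax x hbd) ⟨b, hb, rfl⟩

lemma rMax_le {x : X} {F : Set X} {M : ℝ} (hne : F.Nonempty)
    (h : ∀ b ∈ F, ‖x - b‖ ≤ M) : rMax x F ≤ M :=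
  csSup_le (hne.image _) (by rintro _ ⟨b, hb, rfl⟩; exact h b hb)

lemma rMax_nonneg {x : X} {F : Set X} (hne : F.Nonempty) (hbd : Bornology.IsBounded F) :
    0 ≤ rMax x F :=
  le_trans (norm_nonneg _) (le_rMax hbd hne.choose_spec)

lemma rMax_triangle (x y : X) {F : Set X} (hne : F.Nonempty) (hbd : Bornology.IsBounded F) :
    rMax x F ≤ ‖x - y‖ + rMax y F := by
  refine rMax_le hne fun b hb => ?_
  calc ‖x - b‖ ≤ ‖x - y‖ + ‖y - b‖ := norm_sub_le_norm_sub_add_norm_sub x y b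
    _ ≤ ‖x - y‖ + rMax y F := by linarith [le_rMax (x := y) hbd hb]

lemma rMax_mono {x : X} {F' F : Set X} (hbd : Bornology.IsBounded F)
    (hne' : F'.Nonempty) (hsub : F' ⊆ F) : rMax x F' ≤ rMax x F :=
  csSup_le_csSup (bddAbove_rmax x hbd) (hne'.image _) (Set.image_mono hsub)

lemma continuous_rMax {F : Set X} (hne : F.Nonempty) (hbd : Bornology.IsBounded F) :
    Continuous fun x : X => rMax x F := by
  have : LipschitzWith 1 fun x : X => rMax x F := by
    refine LipschitzWith.of_dist_le_mul fun x y => ?_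
    rw [Real.dist_eq, dist_eq_norm, NNReal.coe_one, one_mul, abs_sub_le_iff]
    constructor
    · linarith [rMax_triangle x y hne hbd]
    · have := rMax_triangle y x hne hbd
      rw [norm_sub_rev] at this
      linarith
  exact this.continuous

lemma bddBelow_rmax_image (V : Set X) {F : Set X} (hne : F.Nonempty)
    (hbd : Bornology.IsBounded F) : BddBelow ((fun v => rMax v F) '' V) :=
  ⟨0, by rintro _ ⟨v, hv, rfl⟩; exact rMax_nonneg hne hbd⟩

lemma chebRad_le_rMax {V F : Set X} (hne : F.Nonempty) (hbd : Bornology.IsBounded F)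
    {v : X} (hv : v ∈ V) : chebRad V F ≤ rMax v F :=
  csInf_le (bddBelow_rmax_image V hne hbd) ⟨v, hv, rfl⟩

lemma le_chebRad {V F : Set X} {M : ℝ} (hV : V.Nonempty)
    (h : ∀ v ∈ V, M ≤ rMax v F) : M ≤ chebRad V F :=
  le_csInf (hV.image _) (by rintro _ ⟨v, hv, rfl⟩; exact h v hv)

lemma rad_le_chebRad {V F : Set X} (hV : V.Nonempty) (hne : F.Nonempty)
    (hbd : Bornology.IsBounded F) : chebRad (Set.univ : Set X) F ≤ chebRad V F :=
  le_chebRad hV fun v _ => chebRad_le_rMax hne hbd (Set.mem_univ v)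

lemma chebRad_singleton (x : X) (F : Set X) : chebRad {x} F = rMax x F := by
  rw [chebRad, Set.image_singleton, csInf_singleton]

lemma exists_centDelta {F : Set X} (hne : F.Nonempty) {δ : ℝ} (hδ : 0 < δ) :
    ∃ c, c ∈ chebCentDelta F δ := by
  have hlt : chebRad (Set.univ : Set X) F < chebRad (Set.univ : Set X) F + δ := by linarith
  obtain ⟨_, ⟨c, -, rfl⟩, hc⟩ := exists_lt_of_csInf_lt
    ((Set.univ_nonempty (α := X)).image _) hlt
  exact ⟨c, le_of_lt hc⟩

lemma centDelta_mono {F : Set X} {δ' δ : ℝ} (h : δ' ≤ δ) :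
    chebCentDelta F δ' ⊆ chebCentDelta F δ := by
  intro x hx
  simp only [chebCentDelta, Set.mem_setOf_eq] at *
  linarith

lemma isClosed_centDelta {F : Set X} (hne : F.Nonempty) (hbd : Bornology.IsBounded F)
    (δ : ℝ) : IsClosed (chebCentDelta F δ) :=
  IsClosed.preimage (continuous_rMax hne hbd) isClosed_Iic

lemma cent_subset_centDelta {F : Set X} {δ : ℝ} (hδ : 0 ≤ δ) :
    chebCent (Set.univ : Set X) F ⊆ chebCentDelta F δ := fun c hc => by
  have := hc.2
  simp only [chebCentDelta, Set.mem_setOf_eq, this]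
  linarith

lemma bddBelow_dist_image (A B : Set X) :
    BddBelow ((fun p : X × X => ‖p.1 - p.2‖) '' (A ×ˢ B)) :=
  ⟨0, by rintro _ ⟨p, hp, rfl⟩; exact norm_nonneg _⟩

lemma setDist'_nonneg (A B : Set X) : 0 ≤ setDist' A B :=
  Real.sInf_nonneg (by rintro _ ⟨p, hp, rfl⟩; exact norm_nonneg _)

lemma setDist'_le {A B : Set X} {a b : X} (ha : a ∈ A) (hb : b ∈ B) :
    setDist' A B ≤ ‖a - b‖ :=
  csInf_le (bddBelow_dist_image A B) ⟨(a, b), ⟨ha, hb⟩, rfl⟩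

lemma exists_setDist'_lt {A B : Set X} (hA : A.Nonempty) (hB : B.Nonempty) {ε : ℝ}
    (hε : 0 < ε) : ∃ a ∈ A, ∃ b ∈ B, ‖a - b‖ < setDist' A B + ε := by
  have hlt : setDist' A B < setDist' A B + ε := by linarith
  obtain ⟨_, ⟨p, hp, rfl⟩, h⟩ := exists_lt_of_csInf_lt ((hA.prod hB).image _) hlt
  exact ⟨p.1, hp.1, p.2, hp.2, h⟩

lemma le_setDist' {A B : Set X} {M : ℝ} (hA : A.Nonempty) (hB : B.Nonempty)
    (h : ∀ a ∈ A, ∀ b ∈ B, M ≤ ‖a - b‖) : M ≤ setDist' A B :=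
  le_csInf ((hA.prod hB).image _) (by rintro _ ⟨p, hp, rfl⟩; exact h p.1 hp.1 p.2 hp.2)

lemma setDist'_anti_right {A B B' : Set X} (hA : A.Nonempty) (hB : B.Nonempty)
    (hsub : B ⊆ B') : setDist' A B' ≤ setDist' A B :=
  csInf_le_csInf (bddBelow_dist_image A B') ((hA.prod hB).image _)
    (Set.image_mono (Set.prod_mono_right hsub))

lemma setDist'_anti_left {A A' B : Set X} (hA : A.Nonempty) (hB : B.Nonempty)
    (hsub : A ⊆ A') : setDist' A' B ≤ setDist' A B :=
  csInf_le_csInf (bddBelow_dist_image A' B) ((hA.prod hB).image _)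
    (Set.image_mono (Set.prod_mono_left hsub))

lemma setDist'_empty (A : Set X) : setDist' A (∅ : Set X) = 0 := by
  rw [setDist', Set.prod_empty, Set.image_empty, Real.sInf_empty]

lemma bddAbove_L {V F : Set X} (hV : V.Nonempty) (hne : F.Nonempty)
    (hbd : Bornology.IsBounded F) :
    BddAbove ((fun δ => setDist' V (chebCentDelta F δ)) '' Set.Ioi (0 : ℝ)) := by
  obtain ⟨v0, hv0⟩ := hV
  obtain ⟨f0, hf0⟩ := id hne
  refine ⟨‖v0‖ + ‖f0‖ + chebRad (Set.univ : Set X) F + 1, ?_⟩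
  rintro _ ⟨δ, hδ, rfl⟩
  have hmin : (0 : ℝ) < min δ 1 := lt_min hδ one_pos
  obtain ⟨c, hc⟩ := exists_centDelta (X := X) hne hmin
  have hcδ : c ∈ chebCentDelta F δ := centDelta_mono (min_le_left δ 1) hc
  have hcnorm : ‖c‖ ≤ chebRad (Set.univ : Set X) F + 1 + ‖f0‖ := by
    have h1 : ‖c - f0‖ ≤ rMax c F := le_rMax hbd hf0
    have h2 : rMax c F ≤ chebRad (Set.univ : Set X) F + min δ 1 := hc
    have h3 : ‖c‖ ≤ ‖c - f0‖ + ‖f0‖ := by simpa using norm_add_le (c - f0) f0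
    have h4 : min δ 1 ≤ 1 := min_le_right δ 1
    linarith
  calc setDist' V (chebCentDelta F δ) ≤ ‖v0 - c‖ := setDist'_le hv0 hcδ
    _ ≤ ‖v0‖ + ‖c‖ := norm_sub_le _ _
    _ ≤ ‖v0‖ + ‖f0‖ + chebRad (Set.univ : Set X) F + 1 := by linarith

lemma le_L {V F : Set X} (hV : V.Nonempty) (hne : F.Nonempty)
    (hbd : Bornology.IsBounded F) {δ : ℝ} (hδ : 0 < δ) :
    setDist' V (chebCentDelta F δ) ≤ Lsup V F :=
  le_csSup (bddAbove_L hV hne hbd) ⟨δ, hδ, rfl⟩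

lemma L_le {V F : Set X} {M : ℝ}
    (h : ∀ δ : ℝ, 0 < δ → setDist' V (chebCentDelta F δ) ≤ M) : Lsup V F ≤ M :=
  csSup_le (Set.Nonempty.image _ ⟨1, by norm_num⟩)
    (by rintro _ ⟨δ, hδ, rfl⟩; exact h δ hδ)



lemma radV_le_rad_add_L {V F : Set X} (hV : V.Nonempty) (hne : F.Nonempty)
    (hbd : Bornology.IsBounded F) :
    chebRad V F ≤ chebRad (Set.univ : Set X) F + Lsup V F := by
  refine le_of_forall_pos_le_add fun ε hε => ?_
  have hε2 : 0 < ε / 2 := by linarith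
  obtain ⟨v, hv, c, hc, hvc⟩ := exists_setDist'_lt hV (exists_centDelta hne hε2) hε2
  have h1 : chebRad V F ≤ rMax v F := chebRad_le_rMax hne hbd hv
  have h2 : rMax v F ≤ ‖v - c‖ + rMax c F := rMax_triangle v c hne hbd
  have h3 : rMax c F ≤ chebRad (Set.univ : Set X) F + ε / 2 := hc
  have h4 : setDist' V (chebCentDelta F (ε / 2)) ≤ Lsup V F := le_L hV hne hbd hε2
  linarith

lemma radV_le_rad_add_dist {V F : Set X} (hV : V.Nonempty) (hne : F.Nonempty)
    (hbd : Bornology.IsBounded F) (hcent : (chebCent (Set.univ : Set X) F).Nonempty) :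
    chebRad V F ≤ chebRad (Set.univ : Set X) F + setDist' V (chebCent (Set.univ : Set X) F) := by
  refine le_of_forall_pos_le_add fun ε hε => ?_
  obtain ⟨v, hv, c, hc, hvc⟩ := exists_setDist'_lt hV hcent hε
  have h2 : rMax v F ≤ ‖v - c‖ + rMax c F := rMax_triangle v c hne hbd
  have h3 : rMax c F = chebRad (Set.univ : Set X) F := hc.2
  linarith [chebRad_le_rMax hne hbd hv]

lemma L_le_dist {V F : Set X} (hV : V.Nonempty)
    (hcent : (chebCent (Set.univ : Set X) F).Nonempty) :
    Lsup V F ≤ setDist' V (chebCent (Set.univ : Set X) F) :=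
  L_le fun _ hδ => setDist'_anti_right hV hcent (cent_subset_centDelta (le_of_lt hδ))

variable [NormedSpace ℝ X]

lemma dist_centDelta_le_of_finite
    (Hfin : ∀ (V : Set X), V.Nonempty → IsClosed V → Convex ℝ V →
      ∀ (F : Set X), F.Nonempty → F.Finite →
        chebRad V F = chebRad (Set.univ : Set X) F
          + setDist' V (chebCent (Set.univ : Set X) F))
    {F : Set X} (hne : F.Nonempty) (hFc : IsCompact F) (x : X) {δ : ℝ} (hδ : 0 < δ) :
    setDist' {x} (chebCentDelta F δ) ≤ rMax x F - chebRad (Set.univ : Set X) F := by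
  have hbd := hFc.isBounded
  refine le_of_forall_pos_le_add fun ε' hε' => ?_
  set ε := min ε' δ with hεdef
  have hε : 0 < ε := lt_min hε' hδ
  have hcov : F ⊆ ⋃ f ∈ F, Metric.ball f ε := fun b hb =>
    Set.mem_biUnion hb (Metric.mem_ball_self hε)
  obtain ⟨t, htF, htfin, htcov⟩ :=
    hFc.elim_finite_subcover_image (fun f _ => Metric.isOpen_ball) hcov
  have htne : t.Nonempty := by
    obtain ⟨f0, hf0⟩ := id hne
    obtain ⟨f, hf, -⟩ := Set.mem_iUnion₂.1 (htcov hf0)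
    exact ⟨f, hf⟩
  have htbd : Bornology.IsBounded t := hbd.subset htF
  have ha : ∀ y : X, rMax y F ≤ rMax y t + ε := by
    intro y
    refine rMax_le hne fun b hb => ?_
    obtain ⟨f, hf, hbf⟩ := Set.mem_iUnion₂.1 (htcov hb)
    have h1 : ‖y - b‖ ≤ ‖y - f‖ + ‖f - b‖ := norm_sub_le_norm_sub_add_norm_sub _ _ _
    have h2 : ‖f - b‖ < ε := by
      rw [norm_sub_rev, ← dist_eq_norm]; exact Metric.mem_ball.1 hbf
    have h3 : ‖y - f‖ ≤ rMax y t := le_rMax htbd hf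
    linarith
  have hb2 : chebRad (Set.univ : Set X) F - ε ≤ chebRad (Set.univ : Set X) t :=
    le_chebRad Set.univ_nonempty fun y _ => by
      have h := chebRad_le_rMax hne hbd (Set.mem_univ y)
      linarith [ha y]
  have hb3 : chebRad (Set.univ : Set X) t ≤ chebRad (Set.univ : Set X) F :=
    le_chebRad Set.univ_nonempty fun y _ =>
      le_trans (chebRad_le_rMax htne htbd (Set.mem_univ y)) (rMax_mono hbd htne htF)
  have hx0 := Hfin {x} (Set.singleton_nonempty x) isClosed_singleton (convex_singleton x)
    t htne htfin
  rw [chebRad_singleton] at hx0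
  have hcentne : (chebCent (Set.univ : Set X) t).Nonempty := by
    by_contra h
    rw [Set.not_nonempty_iff_eq_empty] at h
    rw [h, setDist'_empty, add_zero] at hx0
    exact (Set.eq_empty_iff_forall_notMem.1 h) x ⟨Set.mem_univ x, hx0⟩
  have hsub : chebCent (Set.univ : Set X) t ⊆ chebCentDelta F δ := by
    intro c hc
    have h1 : rMax c F ≤ rMax c t + ε := ha c
    have h2 : rMax c t = chebRad (Set.univ : Set X) t := hc.2
    have hεδ : ε ≤ δ := min_le_right _ _
    show rMax c F ≤ chebRad (Set.univ : Set X) F + δ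
    linarith
  have hkey : setDist' {x} (chebCentDelta F δ) ≤ setDist' {x} (chebCent (Set.univ : Set X) t) :=
    setDist'_anti_right (Set.singleton_nonempty x) hcentne hsub
  have hrx : rMax x t ≤ rMax x F := rMax_mono hbd htne htF
  have hεε' : ε ≤ ε' := min_le_left _ _
  linarith

variable [CompleteSpace X]

lemma exists_center_of_step {F : Set X} (hne : F.Nonempty) (hbd : Bornology.IsBounded F)
    (hstep : ∀ δ1 : ℝ, 0 < δ1 → ∀ x ∈ chebCentDelta F δ1, ∀ δ : ℝ, 0 < δ →
      setDist' {x} (chebCentDelta F δ) ≤ δ1)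
    {δ1 : ℝ} (hδ1 : 0 < δ1) {x : X} (hx : x ∈ chebCentDelta F δ1) :
    ∃ c ∈ chebCent (Set.univ : Set X) F, ‖x - c‖ ≤ 5 * δ1 := by
  set D : ℕ → ℝ := fun n => δ1 * (1 / 2) ^ n with hD
  have hDpos : ∀ n, 0 < D n := fun n => by positivity
  have hDanti : ∀ m n : ℕ, m ≤ n → D n ≤ D m := by
    intro m n hmn
    have : ((1 : ℝ) / 2) ^ n ≤ (1 / 2) ^ m :=
      pow_le_pow_of_le_one (by norm_num) (by norm_num) hmn
    have h1 : 0 < δ1 := hδ1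
    simp only [hD]
    nlinarith
  have Hex : ∀ (n : ℕ) (y : X), y ∈ chebCentDelta F (D n) →
      ∃ z, z ∈ chebCentDelta F (D (n + 1)) ∧ ‖y - z‖ ≤ 2 * D n := by
    intro n y hy
    have h1 : setDist' {y} (chebCentDelta F (D (n + 1))) ≤ D n :=
      hstep (D n) (hDpos n) y hy (D (n + 1)) (hDpos (n + 1))
    obtain ⟨a, ha, z, hz, hlt⟩ := exists_setDist'_lt (Set.singleton_nonempty y)
      (exists_centDelta hne (hDpos (n + 1))) (hDpos (n + 1))
    obtain rfl := Set.mem_singleton_iff.1 ha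
    refine ⟨z, hz, ?_⟩
    have h2 : D (n + 1) ≤ D n := hDanti n (n + 1) (Nat.le_succ n)
    linarith
  choose g hg1 hg2 using Hex
  have hxD0 : x ∈ chebCentDelta F (D 0) := by
    have : D 0 = δ1 := by simp [hD]
    rw [this]; exact hx
  let u : (n : ℕ) → {y : X // y ∈ chebCentDelta F (D n)} :=
    fun n => Nat.rec ⟨x, hxD0⟩ (fun n p => ⟨g n p.1 p.2, hg1 n p.1 p.2⟩) n
  have hu0 : (u 0).1 = x := rfl
  have hdist : ∀ n, dist ((u n).1) ((u (n + 1)).1) ≤ (2 * δ1) * (1 / 2) ^ n := by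
    intro n
    rw [dist_eq_norm]
    have h := hg2 n (u n).1 (u n).2
    have : (u (n + 1)).1 = g n (u n).1 (u n).2 := rfl
    rw [this]
    calc ‖(u n).1 - g n (u n).1 (u n).2‖ ≤ 2 * D n := h
      _ = (2 * δ1) * (1 / 2) ^ n := by simp only [hD]; ring
  have hcauchy : CauchySeq fun n => (u n).1 :=
    cauchySeq_of_le_geometric (1 / 2) (2 * δ1) (by norm_num) hdist
  obtain ⟨c, hc⟩ := cauchySeq_tendsto_of_complete hcauchy
  have hdist0 : dist ((u 0).1) c ≤ (2 * δ1) / (1 - 1 / 2) :=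
    dist_le_of_le_geometric_of_tendsto₀ _ _ (by norm_num) hdist hc
  have hmem : ∀ m, c ∈ chebCentDelta F (D m) := by
    intro m
    refine (isClosed_centDelta hne hbd (D m)).mem_of_tendsto hc ?_
    refine eventually_atTop.2 ⟨m, fun n hn => ?_⟩
    exact centDelta_mono (hDanti m n hn) (u n).2
  have hle : rMax c F ≤ chebRad (Set.univ : Set X) F := by
    refine le_of_forall_pos_le_add fun ε hε => ?_
    obtain ⟨m, hm⟩ := exists_pow_lt_of_lt_one (div_pos hε hδ1) (by norm_num : (1 : ℝ) / 2 < 1)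
    have hDm : D m < ε := by
      have h := mul_lt_mul_of_pos_left hm hδ1
      have h2 : δ1 * (ε / δ1) = ε := by field_simp
      simp only [hD]
      linarith [h, h2]
    have h5 := hmem m
    simp only [chebCentDelta, Set.mem_setOf_eq] at h5
    linarith
  have heq : rMax c F = chebRad (Set.univ : Set X) F :=
    le_antisymm hle (chebRad_le_rMax hne hbd (Set.mem_univ c))
  refine ⟨c, ⟨Set.mem_univ c, heq⟩, ?_⟩
  rw [← dist_eq_norm, ← hu0]
  calc dist ((u 0).1) c ≤ (2 * δ1) / (1 - 1 / 2) := hdist0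
    _ = 4 * δ1 := by ring
    _ ≤ 5 * δ1 := by linarith



lemma pii_to_pi
    (Hii : ∀ (V : Set X), V.Nonempty → IsClosed V → Convex ℝ V →
      ∀ (F : Set X), F.Nonempty → IsCompact F →
        chebRad V F = chebRad (Set.univ : Set X) F
          + sSup ((fun δ => setDist' V (chebCentDelta F δ)) '' Set.Ioi (0 : ℝ))) :
    ∀ (V : Set X), V.Nonempty → IsClosed V → Convex ℝ V →
      ∀ (F : Set X), F.Nonempty → IsCompact F →
        chebRad V F = chebRad (Set.univ : Set X) F
          + setDist' V (chebCent (Set.univ : Set X) F) := by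
  have Hii' : ∀ (V : Set X), V.Nonempty → IsClosed V → Convex ℝ V →
      ∀ (F : Set X), F.Nonempty → IsCompact F →
        chebRad V F = chebRad (Set.univ : Set X) F + Lsup V F := Hii
  intro V hV hVc hVconv F hFne hFc
  have hbd := hFc.isBounded
  have hstep : ∀ δ1 : ℝ, 0 < δ1 → ∀ x ∈ chebCentDelta F δ1, ∀ δ : ℝ, 0 < δ →
      setDist' {x} (chebCentDelta F δ) ≤ δ1 := by
    intro δ1 hδ1 x hx δ hδ
    have h := Hii' {x} (Set.singleton_nonempty x) isClosed_singleton (convex_singleton x)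
      F hFne hFc
    rw [chebRad_singleton] at h
    have h2 : setDist' {x} (chebCentDelta F δ) ≤ Lsup {x} F :=
      le_L (Set.singleton_nonempty x) hFne hbd hδ
    have h3 : rMax x F ≤ chebRad (Set.univ : Set X) F + δ1 := hx
    linarith
  obtain ⟨x1, hx1⟩ := exists_centDelta hFne one_pos
  obtain ⟨c1, hc1, -⟩ := exists_center_of_step hFne hbd hstep one_pos hx1
  have hcent : (chebCent (Set.univ : Set X) F).Nonempty := ⟨c1, hc1⟩
  have hdL : setDist' V (chebCent (Set.univ : Set X) F) ≤ Lsup V F := by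
    refine le_of_forall_pos_le_add fun ε hε => ?_
    have hε7 : 0 < ε / 7 := by linarith
    obtain ⟨v, hv, c, hc, hvc⟩ := exists_setDist'_lt hV (exists_centDelta hFne hε7) hε7
    obtain ⟨c', hc', hcc'⟩ := exists_center_of_step hFne hbd hstep hε7 hc
    have h1 : setDist' V (chebCent (Set.univ : Set X) F) ≤ ‖v - c'‖ := setDist'_le hv hc'
    have h2 : ‖v - c'‖ ≤ ‖v - c‖ + ‖c - c'‖ := norm_sub_le_norm_sub_add_norm_sub _ _ _
    have h3 : setDist' V (chebCentDelta F (ε / 7)) ≤ Lsup V F := le_L hV hFne hbd hε7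
    linarith
  have hLd : Lsup V F ≤ setDist' V (chebCent (Set.univ : Set X) F) := L_le_dist hV hcent
  rw [Hii' V hV hVc hVconv F hFne hFc, le_antisymm hLd hdL]

lemma pi_to_pii
    (Hi : ∀ (V : Set X), V.Nonempty → IsClosed V → Convex ℝ V →
      ∀ (F : Set X), F.Nonempty → IsCompact F →
        chebRad V F = chebRad (Set.univ : Set X) F
          + setDist' V (chebCent (Set.univ : Set X) F)) :
    ∀ (V : Set X), V.Nonempty → IsClosed V → Convex ℝ V →
      ∀ (F : Set X), F.Nonempty → IsCompact F →
        chebRad V F = chebRad (Set.univ : Set X) F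
          + sSup ((fun δ => setDist' V (chebCentDelta F δ)) '' Set.Ioi (0 : ℝ)) := by
  intro V hV hVc hVconv F hFne hFc
  show chebRad V F = chebRad (Set.univ : Set X) F + Lsup V F
  have hbd := hFc.isBounded
  have hcent : (chebCent (Set.univ : Set X) F).Nonempty := by
    by_contra h
    rw [Set.not_nonempty_iff_eq_empty] at h
    obtain ⟨f0, hf0⟩ := id hFne
    have h0 := Hi {f0} (Set.singleton_nonempty f0) isClosed_singleton (convex_singleton f0)
      F hFne hFc
    rw [chebRad_singleton, h, setDist'_empty, add_zero] at h0
    exact (Set.eq_empty_iff_forall_notMem.1 h) f0 ⟨Set.mem_univ f0, h0⟩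
  have h1 := Hi V hV hVc hVconv F hFne hFc
  have h2 : chebRad V F ≤ chebRad (Set.univ : Set X) F + Lsup V F :=
    radV_le_rad_add_L hV hFne hbd
  have h3 : Lsup V F ≤ setDist' V (chebCent (Set.univ : Set X) F) := L_le_dist hV hcent
  have h4 : setDist' V (chebCent (Set.univ : Set X) F) ≤ Lsup V F := by linarith
  rw [h1, le_antisymm h4 h3]

lemma piii_to_pii
    (Hfin : ∀ (V : Set X), V.Nonempty → IsClosed V → Convex ℝ V →
      ∀ (F : Set X), F.Nonempty → F.Finite →
        chebRad V F = chebRad (Set.univ : Set X) F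
          + setDist' V (chebCent (Set.univ : Set X) F)) :
    ∀ (V : Set X), V.Nonempty → IsClosed V → Convex ℝ V →
      ∀ (F : Set X), F.Nonempty → IsCompact F →
        chebRad V F = chebRad (Set.univ : Set X) F
          + sSup ((fun δ => setDist' V (chebCentDelta F δ)) '' Set.Ioi (0 : ℝ)) := by
  intro V hV hVc hVconv F hFne hFc
  show chebRad V F = chebRad (Set.univ : Set X) F + Lsup V F
  have hbd := hFc.isBounded
  refine le_antisymm (radV_le_rad_add_L hV hFne hbd) ?_
  refine le_chebRad hV fun v hv => ?_
  have hL : Lsup V F ≤ rMax v F - chebRad (Set.univ : Set X) F := by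
    refine L_le fun δ hδ => ?_
    have h1 : setDist' V (chebCentDelta F δ) ≤ setDist' {v} (chebCentDelta F δ) :=
      setDist'_anti_left (Set.singleton_nonempty v) (exists_centDelta hFne hδ)
        (Set.singleton_subset_iff.2 hv)
    exact le_trans h1 (dist_centDelta_le_of_finite Hfin hFne hFc v hδ)
  linarith

end ChebAux

/-- Equivalence of the restricted-radius formulas over compact sets, over compact sets with
approximate centers (the limit as `δ → 0⁺` exists by monotonicity and equals the supremum
over `δ > 0`), and over finite sets. -/
theorem chebRad_formula_compact_iff_finite {X : Type*} [NormedAddCommGroup X]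
    [NormedSpace ℝ X] [CompleteSpace X] :
    ((∀ (V : Set X), V.Nonempty → IsClosed V → Convex ℝ V →
          ∀ (F : Set X), F.Nonempty → IsCompact F →
            chebRad V F = chebRad (Set.univ : Set X) F
              + setDist' V (chebCent (Set.univ : Set X) F)) ↔
        ∀ (V : Set X), V.Nonempty → IsClosed V → Convex ℝ V →
          ∀ (F : Set X), F.Nonempty → IsCompact F →
            chebRad V F = chebRad (Set.univ : Set X) F
              + sSup ((fun δ => setDist' V (chebCentDelta F δ)) '' Set.Ioi (0 : ℝ))) ∧
      ((∀ (V : Set X), V.Nonempty → IsClosed V → Convex ℝ V →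
          ∀ (F : Set X), F.Nonempty → IsCompact F →
            chebRad V F = chebRad (Set.univ : Set X) F
              + sSup ((fun δ => setDist' V (chebCentDelta F δ)) '' Set.Ioi (0 : ℝ))) ↔
        ∀ (V : Set X), V.Nonempty → IsClosed V → Convex ℝ V →
          ∀ (F : Set X), F.Nonempty → F.Finite →
            chebRad V F = chebRad (Set.univ : Set X) F
              + setDist' V (chebCent (Set.univ : Set X) F)) := by
  
  constructor
  · exact ⟨fun Hi => ChebAux.pi_to_pii Hi, fun Hii => ChebAux.pii_to_pi Hii⟩
  · constructor
    · intro Hii V hV hVc hVconv F hFne hFfin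
      exact ChebAux.pii_to_pi Hii V hV hVc hVconv F hFne hFfin.isCompact
    · exact fun Hfin => ChebAux.piii_to_pii Hfin
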